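/- Let I be an open interval and f : I → ℝ a positive-derivative C¹ function such that F : I² → ℝ, F(x,u) := (f(x) − f(u))/f′(u), is convex. Then f′ has one-sided second derivatives f″₊ and f″₋ everywhere, and for every x, v ∈ I one has (f(v) − f(x))(f″₊(v) − f″₋(v)) ≥ 0; consequently f″₊ = f″₋ on I, i.e., f′ is differentiable everywhere. -/

import Mathlib

open Set Filter

/-- A convex function on an open set has one-sided derivatives at every point,
with left derivative at most the right derivative. -/
lemma convex_sided_derivs {S : Set ℝ} (hSo : IsOpen S) {g : ℝ → ℝ}
    (hg : ConvexOn ℝ S g) {v : ℝ} (hv : v ∈ S) :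
    ∃ dp dm : ℝ, dm ≤ dp ∧ HasDerivWithinAt g dp (Set.Ioi v) v ∧
      HasDerivWithinAt g dm (Set.Iio v) v := by
  obtain ⟨ε, hε, hball⟩ := Metric.isOpen_iff.1 hSo v hv
  rw [Real.ball_eq_Ioo] at hball
  have hmono := hg.slope_mono hv
  have hsubR : Set.Ioo v (v + ε / 2) ⊆ S \ {v} := by
    intro w hw
    exact ⟨hball ⟨by linarith [hw.1], by linarith [hw.2]⟩, hw.1.ne'⟩
  have hsubL : Set.Ioo (v - ε / 2) v ⊆ S \ {v} := by
    intro w hw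
    exact ⟨hball ⟨by linarith [hw.1], by linarith [hw.2]⟩, hw.2.ne⟩
  have hneR : (Set.Ioo v (v + ε / 2)).Nonempty := ⟨v + ε / 4, by constructor <;> linarith⟩
  have hneL : (Set.Ioo (v - ε / 2) v).Nonempty := ⟨v - ε / 4, by constructor <;> linarith⟩
  -- every left slope is ≤ every right slope
  have hLR : ∀ y ∈ Set.Ioo (v - ε / 2) v, ∀ w ∈ Set.Ioo v (v + ε / 2),
      slope g v y ≤ slope g v w := fun y hy w hw =>
    hmono (hsubL hy) (hsubR hw) (by linarith [hy.2, hw.1])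
  have hbddR : BddBelow (slope g v '' Set.Ioo v (v + ε / 2)) := by
    obtain ⟨y₀, hy₀⟩ := hneL
    refine ⟨slope g v y₀, ?_⟩
    rintro _ ⟨w, hw, rfl⟩
    exact hLR y₀ hy₀ w hw
  have hbddL : BddAbove (slope g v '' Set.Ioo (v - ε / 2) v) := by
    obtain ⟨w₀, hw₀⟩ := hneR
    refine ⟨slope g v w₀, ?_⟩
    rintro _ ⟨y, hy, rfl⟩
    exact hLR y hy w₀ hw₀
  set dp := sInf (slope g v '' Set.Ioo v (v + ε / 2)) with hdp
  set dm := sSup (slope g v '' Set.Ioo (v - ε / 2) v) with hdm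
  have htR : Tendsto (slope g v) (nhdsWithin v (Set.Ioi v)) (nhds dp) :=
    MonotoneOn.tendsto_nhdsWithin_Ioo_right hneR (hmono.mono hsubR) hbddR
  have htL : Tendsto (slope g v) (nhdsWithin v (Set.Iio v)) (nhds dm) :=
    MonotoneOn.tendsto_nhdsWithin_Ioo_left hneL (hmono.mono hsubL) hbddL
  have hdR : HasDerivWithinAt g dp (Set.Ioi v) v :=
    (hasDerivWithinAt_iff_tendsto_slope' notMem_Ioi_self).2 htR
  have hdL : HasDerivWithinAt g dm (Set.Iio v) v :=
    (hasDerivWithinAt_iff_tendsto_slope' notMem_Iio_self).2 htL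
  refine ⟨dp, dm, ?_, hdR, hdL⟩
  refine le_csInf (hneR.image _) ?_
  rintro _ ⟨w, hw, rfl⟩
  refine csSup_le (hneL.image _) ?_
  rintro _ ⟨y, hy, rfl⟩
  exact hLR y hy w hw

theorem stmt_12 (I : Set ℝ) (hIop : IsOpen I) (hIcv : Convex ℝ I)
    (f f' : ℝ → ℝ)
    (hf : ∀ x ∈ I, HasDerivAt f (f' x) x)
    (hf'c : ContinuousOn f' I) (hf'pos : ∀ x ∈ I, 0 < f' x)
    (hF : ConvexOn ℝ (I ×ˢ I) (fun p : ℝ × ℝ => (f p.1 - f p.2) / f' p.2)) :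
    ∃ fpp fmm : ℝ → ℝ,
      (∀ v ∈ I, HasDerivWithinAt f' (fpp v) (Set.Ioi v) v ∧
        HasDerivWithinAt f' (fmm v) (Set.Iio v) v) ∧
      (∀ x ∈ I, ∀ v ∈ I, 0 ≤ (f v - f x) * (fpp v - fmm v)) ∧
      (∀ v ∈ I, fpp v = fmm v) ∧
      (∀ v ∈ I, DifferentiableAt ℝ f' v) := by
  classical
  -- basic facts
  have hfc : ContinuousOn f I := fun x hx => (hf x hx).continuousAt.continuousWithinAt
  have hmono : StrictMonoOn f I := by
    refine strictMonoOn_of_deriv_pos hIcv hfc ?_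
    intro x hx
    rw [hIop.interior_eq] at hx
    rw [(hf x hx).deriv]
    exact hf'pos x hx
  have hfne : ∀ v ∈ I, f' v ≠ 0 := fun v hv => (hf'pos v hv).ne'
  -- slice convexity
  have gconv : ∀ x ∈ I, ConvexOn ℝ I (fun u => (f x - f u) / f' u) := by
    intro x hx
    refine ⟨hIcv, fun u hu w hw a b ha hb hab => ?_⟩
    have key := hF.2 (Set.mk_mem_prod hx hu) (Set.mk_mem_prod hx hw) ha hb hab
    simp only [Prod.smul_mk, Prod.mk_add_mk, smul_eq_mul] at key
    rwa [show a * x + b * x = x by rw [← add_mul, hab, one_mul]] at key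
  -- the key existence claim
  have key : ∀ v ∈ I, ∃ dpv dmv : ℝ, HasDerivWithinAt f' dpv (Set.Ioi v) v ∧
      HasDerivWithinAt f' dmv (Set.Iio v) v ∧
      ∀ x ∈ I, 0 ≤ (f v - f x) * (dpv - dmv) := by
    intro v hv
    obtain ⟨ε, hε, hball⟩ := Metric.isOpen_iff.1 hIop v hv
    rw [Real.ball_eq_Ioo] at hball
    have ha : v - ε / 2 ∈ I := hball ⟨by linarith, by linarith⟩
    have hb : v + ε / 2 ∈ I := hball ⟨by linarith, by linarith⟩
    set a := v - ε / 2
    set b := v + ε / 2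
    have hfab : f a - f b ≠ 0 :=
      sub_ne_zero.2 (ne_of_lt (hmono ha hb (by simp only [a, b]; linarith)))
    set c := (f a - f b)⁻¹ with hc
    -- one-sided derivatives of the two slice functions
    obtain ⟨dp1, dm1, _, hg1p, hg1m⟩ := convex_sided_derivs hIop (gconv a ha) hv
    obtain ⟨dp2, dm2, _, hg2p, hg2m⟩ := convex_sided_derivs hIop (gconv b hb) hv
    -- the function (f' ·)⁻¹ equals c • (g_a - g_b)
    have e : ∀ u : ℝ, (f' u)⁻¹ = c * ((f a - f u) / f' u - (f b - f u) / f' u) := by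
      intro u
      rw [div_sub_div_same, sub_sub_sub_cancel_right, ← mul_div_assoc,
        inv_mul_cancel₀ hfab, one_div]
    set hp := c * (dp1 - dp2) with hhp_def
    set hm := c * (dm1 - dm2) with hhm_def
    have hhp : HasDerivWithinAt (fun u => (f' u)⁻¹) hp (Set.Ioi v) v := by
      have := (hg1p.sub hg2p).const_mul c
      exact this.congr (fun u _ => e u) (e v)
    have hhm : HasDerivWithinAt (fun u => (f' u)⁻¹) hm (Set.Iio v) v := by
      have := (hg1m.sub hg2m).const_mul c
      exact this.congr (fun u _ => e u) (e v)
    have hfv : f' v ≠ 0 := hfne v hv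
    have hinv_ne : (f' v)⁻¹ ≠ 0 := inv_ne_zero hfv
    -- one-sided derivatives of f'
    have hfpp : HasDerivWithinAt f' (-hp * f' v ^ 2) (Set.Ioi v) v := by
      have h2 := hhp.inv hinv_ne
      simp only [Pi.inv_def, inv_inv] at h2
      rw [inv_pow, div_inv_eq_mul] at h2
      exact h2
    have hfmm : HasDerivWithinAt f' (-hm * f' v ^ 2) (Set.Iio v) v := by
      have h2 := hhm.inv hinv_ne
      simp only [Pi.inv_def, inv_inv] at h2
      rw [inv_pow, div_inv_eq_mul] at h2
      exact h2
    refine ⟨-hp * f' v ^ 2, -hm * f' v ^ 2, hfpp, hfmm, ?_⟩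
    -- the inequality
    intro x hx
    obtain ⟨Dp, Dm, hDmDp, hDp, hDm⟩ := convex_sided_derivs hIop (gconv x hx) hv
    have hfd : HasDerivWithinAt (fun u => f x - f u) (-f' v) (Set.Ioi v) v :=
      ((hf v hv).hasDerivWithinAt).const_sub (f x)
    have hfd' : HasDerivWithinAt (fun u => f x - f u) (-f' v) (Set.Iio v) v :=
      ((hf v hv).hasDerivWithinAt).const_sub (f x)
    have hEp : HasDerivWithinAt (fun u => (f x - f u) / f' u)
        (-f' v * (f' v)⁻¹ + (f x - f v) * hp) (Set.Ioi v) v := by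
      have := hfd.mul hhp
      exact this.congr (fun u _ => (div_eq_mul_inv _ _)) (div_eq_mul_inv _ _)
    have hEm : HasDerivWithinAt (fun u => (f x - f u) / f' u)
        (-f' v * (f' v)⁻¹ + (f x - f v) * hm) (Set.Iio v) v := by
      have := hfd'.mul hhm
      exact this.congr (fun u _ => (div_eq_mul_inv _ _)) (div_eq_mul_inv _ _)
    have hDpEq : Dp = -f' v * (f' v)⁻¹ + (f x - f v) * hp := by
      rw [← hDp.derivWithin (uniqueDiffWithinAt_Ioi v),
        ← hEp.derivWithin (uniqueDiffWithinAt_Ioi v)]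
    have hDmEq : Dm = -f' v * (f' v)⁻¹ + (f x - f v) * hm := by
      rw [← hDm.derivWithin (uniqueDiffWithinAt_Iio v),
        ← hEm.derivWithin (uniqueDiffWithinAt_Iio v)]
    have h2 : Dp - Dm = (f x - f v) * (hp - hm) := by rw [hDpEq, hDmEq]; ring
    calc (0 : ℝ) ≤ (Dp - Dm) * f' v ^ 2 :=
          mul_nonneg (by linarith) (sq_nonneg _)
      _ = (f v - f x) * (-hp * f' v ^ 2 - -hm * f' v ^ 2) := by rw [h2]; ring
  choose! fpp fmm hdp hdm hineq using key
  have heq : ∀ v ∈ I, fpp v = fmm v := by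
    intro v hv
    obtain ⟨ε, hε, hball⟩ := Metric.isOpen_iff.1 hIop v hv
    rw [Real.ball_eq_Ioo] at hball
    have ha : v - ε / 2 ∈ I := hball ⟨by linarith, by linarith⟩
    have hb : v + ε / 2 ∈ I := hball ⟨by linarith, by linarith⟩
    have h1 : f (v - ε / 2) < f v := hmono ha hv (by linarith)
    have h2 : f v < f (v + ε / 2) := hmono hv hb (by linarith)
    have i1 := hineq v hv (v - ε / 2) ha
    have i2 := hineq v hv (v + ε / 2) hb
    nlinarith [i1, i2]
  refine ⟨fpp, fmm, fun v hv => ⟨hdp v hv, hdm v hv⟩,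
    fun x hx v hv => hineq v hv x hx, heq, ?_⟩
  intro v hv
  have hm' : HasDerivWithinAt f' (fpp v) (Set.Iio v) v := (heq v hv) ▸ hdm v hv
  have hu : HasDerivWithinAt f' (fpp v) (Set.Iio v ∪ Set.Ioi v) v := hm'.union (hdp v hv)
  rw [Set.Iio_union_Ioi, Set.compl_eq_univ_diff, hasDerivWithinAt_diff_singleton,
    hasDerivWithinAt_univ] at hu
  exact hu.differentiableAt
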